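/- Let κ₀ > 0 be a real number. If κ(x,y) ≥ κ₀ for every pair of adjacent vertices x, y of G, then the diameter of G satisfies diam(G) ≤ 2/κ₀, i.e. d(x,y) ≤ 2/κ₀ for all vertices x, y. -/

import Mathlib

open Finset Filter Topology

noncomputable section

/-- A coupling between two (probability) mass functions `μ` and `ν` on a finite
vertex set: a matrix with values in `[0,1]` whose row sums are `μ` and whose
column sums are `ν`. -/
def IsCoupling {V : Type*} [Fintype V] (A : V → V → ℝ) (μ ν : V → ℝ) : Prop :=
  (∀ x y, 0 ≤ A x y ∧ A x y ≤ 1) ∧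
  (∀ x, ∑ y, A x y = μ x) ∧
  (∀ y, ∑ x, A x y = ν y)

/-- The (1-)Wasserstein distance between two mass functions on the vertex set of a
graph, with respect to the graph distance. -/
def Wass {V : Type*} [Fintype V] (G : SimpleGraph V) (μ ν : V → ℝ) : ℝ :=
  sInf {c | ∃ A : V → V → ℝ, IsCoupling A μ ν ∧
    c = ∑ x, ∑ y, A x y * (G.dist x y : ℝ)}

/-- The probability measure `m_x^α`: mass `α` at `x`, mass `(1-α)/d_x` at each
neighbor of `x`, and `0` elsewhere. -/
def mMeas {V : Type*} [Fintype V] [DecidableEq V] (G : SimpleGraph V)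
    [DecidableRel G.Adj] (α : ℝ) (x : V) : V → ℝ :=
  fun z => if z = x then α else if G.Adj x z then (1 - α) / (G.degree x : ℝ) else 0

/-- The `α`-Ricci curvature `κ_α(x,y) = 1 - W(m_x^α, m_y^α)/d(x,y)`. -/
def kappaAlpha {V : Type*} [Fintype V] [DecidableEq V] (G : SimpleGraph V)
    [DecidableRel G.Adj] (α : ℝ) (x y : V) : ℝ :=
  1 - Wass G (mMeas G α x) (mMeas G α y) / (G.dist x y : ℝ)

/-- The Lin–Lu–Yau Ricci curvature `κ(x,y) = lim_{α→1⁻} κ_α(x,y)/(1-α)`. -/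
def kappa {V : Type*} [Fintype V] [DecidableEq V] (G : SimpleGraph V)
    [DecidableRel G.Adj] (x y : V) : ℝ :=
  limUnder (𝓝[<] (1 : ℝ)) (fun α => kappaAlpha G α x y / (1 - α))

/-- The (non-normalized) graph Laplacian `(Δf)(x) = d_x f(x) - ∑_{y ~ x} f(y)`. -/
def lap {V : Type*} [Fintype V] [DecidableEq V] (G : SimpleGraph V)
    [DecidableRel G.Adj] (f : V → ℝ) (x : V) : ℝ :=
  (G.degree x : ℝ) * f x - ∑ y ∈ G.neighborFinset x, f y

end

noncomputable section

set_option linter.unusedSectionVars false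

namespace LLYaux

variable {V : Type*} [Fintype V] [DecidableEq V] (G : SimpleGraph V) [DecidableRel G.Adj]

lemma cost_nonneg {A : V → V → ℝ} (hA : ∀ x y, 0 ≤ A x y) :
    0 ≤ ∑ x, ∑ y, A x y * (G.dist x y : ℝ) :=
  Finset.sum_nonneg fun x _ => Finset.sum_nonneg fun y _ =>
    mul_nonneg (hA x y) (Nat.cast_nonneg _)

lemma wass_bddBelow (μ ν : V → ℝ) :
    BddBelow {c | ∃ A : V → V → ℝ, IsCoupling A μ ν ∧
      c = ∑ x, ∑ y, A x y * (G.dist x y : ℝ)} := by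
  refine ⟨0, ?_⟩
  rintro c ⟨A, hA, rfl⟩
  exact cost_nonneg G fun x y => (hA.1 x y).1

lemma wass_le {μ ν : V → ℝ} {A : V → V → ℝ} (hA : IsCoupling A μ ν) :
    Wass G μ ν ≤ ∑ x, ∑ y, A x y * (G.dist x y : ℝ) :=
  csInf_le (wass_bddBelow G μ ν) ⟨A, hA, rfl⟩

lemma le_wass {μ ν : V → ℝ} (hne : ∃ A, IsCoupling A μ ν) (f : V → ℝ)
    (hf : ∀ u v, f v - f u ≤ (G.dist u v : ℝ)) :
    (∑ v, ν v * f v) - (∑ u, μ u * f u) ≤ Wass G μ ν := by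
  obtain ⟨A₀, hA₀⟩ := hne
  refine le_csInf ⟨_, A₀, hA₀, rfl⟩ ?_
  rintro c ⟨A, hA, rfl⟩
  have h1 : ∑ x, ∑ y, A x y * f y = ∑ v, ν v * f v := by
    rw [Finset.sum_comm]
    exact Finset.sum_congr rfl fun v _ => by rw [← Finset.sum_mul, hA.2.2 v]
  have h2 : ∑ x : V, ∑ y : V, A x y * f x = ∑ u, μ u * f u := by
    refine Finset.sum_congr rfl fun u _ => ?_
    rw [← Finset.sum_mul] at *
    rw [hA.2.1 u]
  calc (∑ v, ν v * f v) - (∑ u, μ u * f u)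
      = ∑ x, ∑ y, (A x y * f y - A x y * f x) := by
        rw [← h1, ← h2, ← Finset.sum_sub_distrib]
        exact Finset.sum_congr rfl fun x _ => by rw [← Finset.sum_sub_distrib]
    _ ≤ ∑ x, ∑ y, A x y * (G.dist x y : ℝ) := by
        refine Finset.sum_le_sum fun x _ => Finset.sum_le_sum fun y _ => ?_
        rw [← mul_sub]
        exact mul_le_mul_of_nonneg_left (hf x y) (hA.1 x y).1

lemma mMeas_decomp (α : ℝ) (x z : V) :
    mMeas G α x z = (if z = x then α else 0)
      + (if z ∈ G.neighborFinset x then (1 - α) / (G.degree x : ℝ) else 0) := by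
  by_cases hz : z = x
  · subst hz
    simp [mMeas, G.irrefl]
  · by_cases ha : G.Adj x z <;> simp [mMeas, hz, ha]

lemma mMeas_sum {x : V} (hd : 0 < G.degree x) (α : ℝ) :
    ∑ z, mMeas G α x z = 1 := by
  have hne : (G.degree x : ℝ) ≠ 0 := by positivity
  simp only [mMeas_decomp, Finset.sum_add_distrib]
  rw [Finset.sum_ite_eq' Finset.univ x (fun _ => α)]
  rw [Finset.sum_ite_mem, Finset.univ_inter, Finset.sum_const,
    SimpleGraph.card_neighborFinset_eq_degree]
  simp only [Finset.mem_univ, if_true, nsmul_eq_mul]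
  field_simp
  ring

lemma mMeas_nonneg {α : ℝ} (hα0 : 0 ≤ α) (hα1 : α ≤ 1) (x z : V) :
    0 ≤ mMeas G α x z := by
  unfold mMeas
  split_ifs
  · exact hα0
  · exact div_nonneg (by linarith) (Nat.cast_nonneg _)
  · exact le_refl 0

lemma mMeas_le_one {α : ℝ} {x : V} (hα0 : 0 ≤ α) (hα1 : α ≤ 1) (hd : 0 < G.degree x) (z : V) :
    mMeas G α x z ≤ 1 := by
  have h1 : (1 : ℝ) ≤ (G.degree x : ℝ) := by exact_mod_cast hd
  unfold mMeas
  split_ifs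
  · exact hα1
  · rw [div_le_one (by linarith)]
    linarith
  · norm_num

lemma mMeas_one (x : V) : mMeas G 1 x = fun z => if z = x then 1 else 0 := by
  funext z
  unfold mMeas
  split_ifs <;> simp

lemma mMeas_affine {t α₁ α₃ : ℝ} (x z : V) :
    mMeas G (t * α₁ + (1 - t) * α₃) x z
      = t * mMeas G α₁ x z + (1 - t) * mMeas G α₃ x z := by
  unfold mMeas
  split_ifs <;> ring

lemma isCoupling_prod {μ ν : V → ℝ} (hμ0 : ∀ u, 0 ≤ μ u) (hμ1 : ∀ u, μ u ≤ 1)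
    (hν0 : ∀ u, 0 ≤ ν u) (hν1 : ∀ u, ν u ≤ 1)
    (hμs : ∑ u, μ u = 1) (hνs : ∑ u, ν u = 1) :
    IsCoupling (fun u v => μ u * ν v) μ ν := by
  refine ⟨fun u v => ⟨mul_nonneg (hμ0 u) (hν0 v), ?_⟩, fun u => ?_, fun v => ?_⟩
  · calc μ u * ν v ≤ 1 * 1 := mul_le_mul (hμ1 u) (hν1 v) (hν0 v) zero_le_one
      _ = 1 := by ring
  · rw [← Finset.mul_sum, hνs, mul_one]
  · rw [← Finset.sum_mul, hμs, one_mul]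

lemma exists_coupling_mMeas (hd : ∀ v : V, 0 < G.degree v) {α : ℝ}
    (hα0 : 0 ≤ α) (hα1 : α ≤ 1) (x y : V) :
    ∃ A, IsCoupling A (mMeas G α x) (mMeas G α y) :=
  ⟨_, isCoupling_prod (mMeas_nonneg G hα0 hα1 x) (mMeas_le_one G hα0 hα1 (hd x))
    (mMeas_nonneg G hα0 hα1 y) (mMeas_le_one G hα0 hα1 (hd y))
    (mMeas_sum G (hd x) α) (mMeas_sum G (hd y) α)⟩

end LLYaux

end

namespace LLYaux

variable {V : Type*} [Fintype V] [DecidableEq V] (G : SimpleGraph V) [DecidableRel G.Adj]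

lemma col_zero {A μ ν : _} {v : V} (hA : IsCoupling A μ ν) (hv : ν v = 0) (u : V) :
    A u v = 0 := by
  have h := hA.2.2 v
  rw [hv] at h
  exact (Finset.sum_eq_zero_iff_of_nonneg (fun u _ => (hA.1 u v).1)).1 h u (Finset.mem_univ u)

lemma row_zero {A ν ρ : _} {v : V} (hB : IsCoupling A ν ρ) (hv : ν v = 0) (w : V) :
    A v w = 0 := by
  have h := hB.2.1 v
  rw [hv] at h
  exact (Finset.sum_eq_zero_iff_of_nonneg (fun w _ => (hB.1 v w).1)).1 h w (Finset.mem_univ w)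

lemma wass_triangle (hconn : G.Connected) {μ ν ρ : V → ℝ}
    (hμ1 : ∀ u, μ u ≤ 1) (hρ1 : ∀ u, ρ u ≤ 1)
    (h1 : ∃ A, IsCoupling A μ ν) (h2 : ∃ B, IsCoupling B ν ρ) :
    Wass G μ ρ ≤ Wass G μ ν + Wass G ν ρ := by
  refine le_of_forall_pos_le_add fun ε hε => ?_
  have hne1 : {c | ∃ A : V → V → ℝ, IsCoupling A μ ν ∧
      c = ∑ x, ∑ y, A x y * (G.dist x y : ℝ)}.Nonempty := by
    obtain ⟨A, hA⟩ := h1; exact ⟨_, A, hA, rfl⟩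
  have hne2 : {c | ∃ A : V → V → ℝ, IsCoupling A ν ρ ∧
      c = ∑ x, ∑ y, A x y * (G.dist x y : ℝ)}.Nonempty := by
    obtain ⟨B, hB⟩ := h2; exact ⟨_, B, hB, rfl⟩
  obtain ⟨c1, ⟨A, hA, rfl⟩, hc1⟩ := Real.lt_sInf_add_pos hne1 (half_pos hε)
  obtain ⟨c2, ⟨B, hB, rfl⟩, hc2⟩ := Real.lt_sInf_add_pos hne2 (half_pos hε)
  set C : V → V → ℝ := fun u w => ∑ v, A u v * B v w / ν v with hC
  have hcancel : ∀ (a : ℝ) (v : V), (ν v = 0 → a = 0) → a / ν v * ν v = a := by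
    intro a v h
    by_cases hv : ν v = 0
    · simp [hv, h hv]
    · exact div_mul_cancel₀ a hv
  have hC0 : ∀ u w, 0 ≤ C u w := fun u w =>
    Finset.sum_nonneg fun v _ => div_nonneg (mul_nonneg (hA.1 u v).1 (hB.1 v w).1)
      ((hA.1 u v).1.trans (by
        rw [← hA.2.2 v]
        exact Finset.single_le_sum (fun u' _ => (hA.1 u' v).1) (Finset.mem_univ u)))
  have hrow : ∀ u, ∑ w, C u w = μ u := by
    intro u
    rw [Finset.sum_comm]
    have : ∀ v : V, ∑ w, A u v * B v w / ν v = A u v := by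
      intro v
      have : ∀ w : V, A u v * B v w / ν v = A u v / ν v * B v w := fun w => by ring
      simp only [this]
      rw [← Finset.mul_sum, hB.2.1 v]
      exact hcancel _ _ (fun hv => col_zero hA hv u)
    simp only [this]
    exact hA.2.1 u
  have hcol : ∀ w, ∑ u, C u w = ρ w := by
    intro w
    rw [Finset.sum_comm]
    have : ∀ v : V, ∑ u, A u v * B v w / ν v = B v w := by
      intro v
      have : ∀ u : V, A u v * B v w / ν v = B v w / ν v * A u v := fun u => by ring
      simp only [this]
      rw [← Finset.mul_sum, hA.2.2 v]
      exact hcancel _ _ (fun hv => row_zero hB hv w)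
    simp only [this]
    exact hB.2.2 w
  have hCcoup : IsCoupling C μ ρ := by
    refine ⟨fun u w => ⟨hC0 u w, ?_⟩, hrow, hcol⟩
    calc C u w ≤ ∑ w', C u w' :=
          Finset.single_le_sum (fun w' _ => hC0 u w') (Finset.mem_univ w)
      _ = μ u := hrow u
      _ ≤ 1 := hμ1 u
  have hcost : ∑ u, ∑ w, C u w * (G.dist u w : ℝ)
      ≤ (∑ u, ∑ v, A u v * (G.dist u v : ℝ)) + ∑ v, ∑ w, B v w * (G.dist v w : ℝ) := by
    have step1 : ∑ u, ∑ w, C u w * (G.dist u w : ℝ)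
        ≤ ∑ u, ∑ w, ∑ v, A u v * B v w / ν v * ((G.dist u v : ℝ) + (G.dist v w : ℝ)) := by
      refine Finset.sum_le_sum fun u _ => Finset.sum_le_sum fun w _ => ?_
      rw [hC, Finset.sum_mul]
      refine Finset.sum_le_sum fun v _ => ?_
      refine mul_le_mul_of_nonneg_left ?_ (div_nonneg (mul_nonneg (hA.1 u v).1 (hB.1 v w).1)
        ((hA.1 u v).1.trans (by
          rw [← hA.2.2 v]
          exact Finset.single_le_sum (fun u' _ => (hA.1 u' v).1) (Finset.mem_univ u))))
      have := hconn.dist_triangle (u := u) (v := v) (w := w)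
      exact_mod_cast this
    have step2 : ∑ u, ∑ w, ∑ v, A u v * B v w / ν v * ((G.dist u v : ℝ) + (G.dist v w : ℝ))
        = (∑ u, ∑ v, ∑ w, A u v * B v w / ν v * (G.dist u v : ℝ))
          + ∑ u, ∑ v, ∑ w, A u v * B v w / ν v * (G.dist v w : ℝ) := by
      rw [← Finset.sum_add_distrib]
      refine Finset.sum_congr rfl fun u _ => ?_
      rw [Finset.sum_comm, ← Finset.sum_add_distrib]
      refine Finset.sum_congr rfl fun v _ => ?_
      rw [← Finset.sum_add_distrib]
      exact Finset.sum_congr rfl fun w _ => by ring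
    have hP : ∑ u, ∑ v, ∑ w, A u v * B v w / ν v * (G.dist u v : ℝ)
        = ∑ u, ∑ v, A u v * (G.dist u v : ℝ) := by
      refine Finset.sum_congr rfl fun u _ => Finset.sum_congr rfl fun v _ => ?_
      have : ∀ w : V, A u v * B v w / ν v * (G.dist u v : ℝ)
          = A u v * (G.dist u v : ℝ) / ν v * B v w := fun w => by ring
      simp only [this]
      rw [← Finset.mul_sum, hB.2.1 v]
      exact hcancel _ _ (fun hv => by rw [col_zero hA hv u, zero_mul])
    have hQ : ∑ u, ∑ v, ∑ w, A u v * B v w / ν v * (G.dist v w : ℝ)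
        = ∑ v, ∑ w, B v w * (G.dist v w : ℝ) := by
      rw [Finset.sum_comm]
      refine Finset.sum_congr rfl fun v _ => ?_
      rw [Finset.sum_comm]
      refine Finset.sum_congr rfl fun w _ => ?_
      have : ∀ u : V, A u v * B v w / ν v * (G.dist v w : ℝ)
          = B v w * (G.dist v w : ℝ) / ν v * A u v := fun u => by ring
      simp only [this]
      rw [← Finset.mul_sum, hA.2.2 v]
      exact hcancel _ _ (fun hv => by rw [row_zero hB hv w, zero_mul])
    rw [step2, hP, hQ] at step1
    exact step1
  calc Wass G μ ρ ≤ ∑ u, ∑ w, C u w * (G.dist u w : ℝ) := wass_le G hCcoup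
    _ ≤ (∑ u, ∑ v, A u v * (G.dist u v : ℝ)) + ∑ v, ∑ w, B v w * (G.dist v w : ℝ) := hcost
    _ ≤ (Wass G μ ν + ε / 2) + (Wass G ν ρ + ε / 2) := add_le_add hc1.le hc2.le
    _ = Wass G μ ν + Wass G ν ρ + ε := by ring

end LLYaux

namespace LLYaux

variable {V : Type*} [Fintype V] [DecidableEq V] (G : SimpleGraph V) [DecidableRel G.Adj]

lemma wass_self_le (μ : V → ℝ) (hμ0 : ∀ u, 0 ≤ μ u) (hμ1 : ∀ u, μ u ≤ 1) :
    Wass G μ μ ≤ 0 := by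
  have hcoup : IsCoupling (fun u v => if u = v then μ u else 0) μ μ := by
    refine ⟨fun u v => ?_, fun u => ?_, fun v => ?_⟩
    · dsimp only
      split_ifs with h
      · exact ⟨hμ0 u, hμ1 u⟩
      · exact ⟨le_refl 0, zero_le_one⟩
    · simp
    · simp [Finset.sum_ite_eq]
  refine (wass_le G hcoup).trans (le_of_eq ?_)
  refine Finset.sum_eq_zero fun u _ => Finset.sum_eq_zero fun v _ => ?_
  split_ifs with h
  · subst h; simp [SimpleGraph.dist_self]
  · simp

lemma wass_chain (hconn : G.Connected) (hd : ∀ v : V, 0 < G.degree v) {α : ℝ}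
    (hα0 : 0 ≤ α) (hα1 : α ≤ 1) {c : ℝ}
    (hedge : ∀ u v, G.Adj u v → Wass G (mMeas G α u) (mMeas G α v) ≤ c)
    {x y : V} (p : G.Walk x y) :
    Wass G (mMeas G α x) (mMeas G α y) ≤ (p.length : ℝ) * c := by
  induction p with
  | nil =>
      simpa using wass_self_le G _ (mMeas_nonneg G hα0 hα1 _)
        (mMeas_le_one G hα0 hα1 (hd _))
  | cons h p ih =>
      rename_i u v w
      calc Wass G (mMeas G α u) (mMeas G α w)
          ≤ Wass G (mMeas G α u) (mMeas G α v) + Wass G (mMeas G α v) (mMeas G α w) :=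
            wass_triangle G hconn (mMeas_le_one G hα0 hα1 (hd u))
              (mMeas_le_one G hα0 hα1 (hd w))
              (exists_coupling_mMeas G hd hα0 hα1 u v)
              (exists_coupling_mMeas G hd hα0 hα1 v w)
        _ ≤ c + (p.length : ℝ) * c := add_le_add (hedge u v h) ih
        _ = (((SimpleGraph.Walk.cons h p).length : ℕ) : ℝ) * c := by
            rw [SimpleGraph.Walk.length_cons]
            push_cast
            ring

lemma mMeas_expect (α : ℝ) (x : V) (g : V → ℝ) :
    ∑ z, mMeas G α x z * g z
      = α * g x + (1 - α) / (G.degree x : ℝ) * ∑ z ∈ G.neighborFinset x, g z := by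
  simp only [mMeas_decomp, add_mul, Finset.sum_add_distrib]
  congr 1
  · rw [Finset.sum_congr rfl (fun z _ => by rw [ite_mul, zero_mul]),
      Finset.sum_ite_eq' Finset.univ x (fun z => α * g z)]
    simp
  · rw [Finset.sum_congr rfl (fun z _ => by rw [ite_mul, zero_mul]),
      Finset.sum_ite_mem, Finset.univ_inter, Finset.mul_sum]

lemma wass_lower (hconn : G.Connected) (hd : ∀ v : V, 0 < G.degree v) {α : ℝ}
    (hα0 : 0 ≤ α) (hα1 : α ≤ 1) {x y : V} (hxy : x ≠ y) :
    (G.dist x y : ℝ) - 2 * (1 - α) ≤ Wass G (mMeas G α x) (mMeas G α y) := by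
  have hf : ∀ u v : V, ((G.dist x v : ℝ)) - (G.dist x u : ℝ) ≤ (G.dist u v : ℝ) := by
    intro u v
    have h := hconn.dist_triangle (u := x) (v := u) (w := v)
    have h' := (Nat.cast_le (α := ℝ)).2 h
    push_cast at h' ⊢
    linarith
  have key := le_wass G (exists_coupling_mMeas G hd hα0 hα1 x y)
    (fun z => (G.dist x z : ℝ)) hf
  have hdegx : (G.degree x : ℝ) ≠ 0 := by
    have := hd x; positivity
  have hdegy0 : (0:ℝ) < (G.degree y : ℝ) := by exact_mod_cast hd y
  have hEx : ∑ u, mMeas G α x u * (G.dist x u : ℝ) = 1 - α := by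
    rw [mMeas_expect]
    have hsum : ∑ z ∈ G.neighborFinset x, (G.dist x z : ℝ) = (G.degree x : ℝ) := by
      rw [Finset.sum_congr rfl (fun z hz => ?_), Finset.sum_const,
        SimpleGraph.card_neighborFinset_eq_degree, nsmul_eq_mul, mul_one]
      rw [SimpleGraph.mem_neighborFinset] at hz
      exact_mod_cast SimpleGraph.dist_eq_one_iff_adj.2 hz
    rw [hsum, SimpleGraph.dist_self]
    field_simp
    simp
  have h1d : (1 : ℝ) ≤ (G.dist x y : ℝ) := by
    exact_mod_cast hconn.pos_dist_of_ne hxy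
  have hEy : (G.dist x y : ℝ) - (1 - α) ≤ ∑ v, mMeas G α y v * (G.dist x v : ℝ) := by
    rw [mMeas_expect]
    have hsum : (G.degree y : ℝ) * ((G.dist x y : ℝ) - 1)
        ≤ ∑ z ∈ G.neighborFinset y, (G.dist x z : ℝ) := by
      calc (G.degree y : ℝ) * ((G.dist x y : ℝ) - 1)
          = ∑ _z ∈ G.neighborFinset y, ((G.dist x y : ℝ) - 1) := by
            rw [Finset.sum_const, SimpleGraph.card_neighborFinset_eq_degree, nsmul_eq_mul]
        _ ≤ ∑ z ∈ G.neighborFinset y, (G.dist x z : ℝ) := by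
            refine Finset.sum_le_sum fun z hz => ?_
            rw [SimpleGraph.mem_neighborFinset] at hz
            have h1 := hconn.dist_triangle (u := x) (v := z) (w := y)
            have h2 : G.dist z y = 1 := SimpleGraph.dist_eq_one_iff_adj.2 hz.symm
            rw [h2] at h1
            have h1' := (Nat.cast_le (α := ℝ)).2 h1
            push_cast at h1'
            linarith
    have hmul : (1 - α) / (G.degree y : ℝ) * ((G.degree y : ℝ) * ((G.dist x y : ℝ) - 1))
        ≤ (1 - α) / (G.degree y : ℝ) * ∑ z ∈ G.neighborFinset y, (G.dist x z : ℝ) :=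
      mul_le_mul_of_nonneg_left hsum (div_nonneg (by linarith) hdegy0.le)
    have hid : (1 - α) / (G.degree y : ℝ) * ((G.degree y : ℝ) * ((G.dist x y : ℝ) - 1))
        = (1 - α) * ((G.dist x y : ℝ) - 1) := by
      field_simp
    rw [hid] at hmul
    nlinarith [hmul]
  rw [hEx] at key
  linarith

end LLYaux

namespace LLYaux

variable {V : Type*} [Fintype V] [DecidableEq V] (G : SimpleGraph V) [DecidableRel G.Adj]

lemma indicator_sum (x : V) : ∑ z : V, (if z = x then (1:ℝ) else 0) = 1 := by
  rw [Finset.sum_ite_eq' Finset.univ x (fun _ => (1:ℝ))]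
  simp

lemma kappaAlpha_mono (hd : ∀ v : V, 0 < G.degree v) {x y : V} (hxy : G.Adj x y) :
    MonotoneOn (fun α => kappaAlpha G α x y / (1 - α)) (Set.Ioo (0:ℝ) 1) := by
  intro a ha b hb hab
  have d1 : G.dist x y = 1 := SimpleGraph.dist_eq_one_iff_adj.2 hxy
  set Wa := Wass G (mMeas G a x) (mMeas G a y) with hWa
  set Wb := Wass G (mMeas G b x) (mMeas G b y) with hWb
  set t := (1 - b) / (1 - a) with hT
  have h1a : 0 < 1 - a := by linarith [ha.2]
  have h1b : 0 < 1 - b := by linarith [hb.2]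
  have ht0 : 0 < t := div_pos h1b h1a
  have ht1 : t ≤ 1 := by rw [hT, div_le_one h1a]; linarith
  have ht' : t * (1 - a) = 1 - b := div_mul_cancel₀ _ h1a.ne'
  have hb_eq : b = t * a + (1 - t) * 1 := by nlinarith [ht']
  have hconv : Wb ≤ t * Wa + (1 - t) := by
    refine le_of_forall_pos_le_add fun ε hε => ?_
    have hne : {c | ∃ A : V → V → ℝ, IsCoupling A (mMeas G a x) (mMeas G a y) ∧
        c = ∑ u, ∑ v, A u v * (G.dist u v : ℝ)}.Nonempty := by
      obtain ⟨A, hA⟩ := exists_coupling_mMeas G hd ha.1.le ha.2.le x y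
      exact ⟨_, A, hA, rfl⟩
    obtain ⟨c1, ⟨A, hA, rfl⟩, hc1⟩ := Real.lt_sInf_add_pos hne hε
    set P : V → V → ℝ := fun u v => (if u = x then (1:ℝ) else 0) * (if v = y then (1:ℝ) else 0)
      with hP
    have hPcoup : IsCoupling P (mMeas G 1 x) (mMeas G 1 y) := by
      rw [mMeas_one, mMeas_one]
      exact isCoupling_prod (fun u => by split_ifs <;> norm_num)
        (fun u => by split_ifs <;> norm_num)
        (fun u => by split_ifs <;> norm_num)
        (fun u => by split_ifs <;> norm_num)
        (indicator_sum x) (indicator_sum y)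
    have hPcost : ∑ u, ∑ v, P u v * (G.dist u v : ℝ) = 1 := by
      have huv : ∀ u v : V, P u v * (G.dist u v : ℝ)
          = if u = x then (if v = y then (G.dist u v : ℝ) else 0) else 0 := by
        intro u v
        rw [hP]
        by_cases hu : u = x <;> by_cases hv : v = y <;> simp [hu, hv]
      simp only [huv]
      have hinner : ∀ u : V, ∑ v, (if u = x then (if v = y then (G.dist u v : ℝ) else 0) else 0)
          = if u = x then (G.dist u y : ℝ) else 0 := by
        intro u
        by_cases hu : u = x
        · simp only [hu, if_true]
          rw [Finset.sum_ite_eq' Finset.univ y (fun v => (G.dist x v : ℝ))]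
          simp
        · simp [hu]
      simp only [hinner]
      rw [Finset.sum_ite_eq' Finset.univ x (fun u => (G.dist u y : ℝ))]
      simp [d1]
    set C : V → V → ℝ := fun u v => t * A u v + (1 - t) * P u v with hC
    have hCcoup : IsCoupling C (mMeas G b x) (mMeas G b y) := by
      refine ⟨fun u v => ⟨?_, ?_⟩, fun u => ?_, fun v => ?_⟩
      · exact add_nonneg (mul_nonneg ht0.le (hA.1 u v).1)
          (mul_nonneg (by linarith) (hPcoup.1 u v).1)
      · calc t * A u v + (1 - t) * P u v ≤ t * 1 + (1 - t) * 1 :=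
            add_le_add (mul_le_mul_of_nonneg_left (hA.1 u v).2 ht0.le)
              (mul_le_mul_of_nonneg_left (hPcoup.1 u v).2 (by linarith))
          _ = 1 := by ring
      · rw [hC]
        simp only [Finset.sum_add_distrib, ← Finset.mul_sum]
        rw [hA.2.1 u, hPcoup.2.1 u]
        conv_rhs => rw [hb_eq]
        rw [mMeas_affine]
      · rw [hC]
        simp only [Finset.sum_add_distrib, ← Finset.mul_sum]
        rw [hA.2.2 v, hPcoup.2.2 v]
        conv_rhs => rw [hb_eq]
        rw [mMeas_affine]
    have hCcost : ∑ u, ∑ v, C u v * (G.dist u v : ℝ)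
        = t * (∑ u, ∑ v, A u v * (G.dist u v : ℝ)) + (1 - t) := by
      have e : ∑ u, ∑ v, C u v * (G.dist u v : ℝ)
          = ∑ u, ∑ v, (t * (A u v * (G.dist u v : ℝ))
              + (1 - t) * (P u v * (G.dist u v : ℝ))) := by
        refine Finset.sum_congr rfl fun u _ => Finset.sum_congr rfl fun v _ => ?_
        rw [hC]; ring
      rw [e]
      simp only [Finset.sum_add_distrib, ← Finset.mul_sum]
      rw [hPcost, mul_one]
    calc Wb ≤ ∑ u, ∑ v, C u v * (G.dist u v : ℝ) := wass_le G hCcoup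
      _ = t * (∑ u, ∑ v, A u v * (G.dist u v : ℝ)) + (1 - t) := hCcost
      _ ≤ t * (Wa + ε) + (1 - t) :=
          add_le_add (mul_le_mul_of_nonneg_left hc1.le ht0.le) le_rfl
      _ ≤ t * Wa + (1 - t) + ε := by nlinarith [ht1, hε.le]
  have hKa : kappaAlpha G a x y = 1 - Wa := by
    rw [kappaAlpha, d1]; norm_num [hWa]
  have hKb : kappaAlpha G b x y = 1 - Wb := by
    rw [kappaAlpha, d1]; norm_num [hWb]
  dsimp only
  rw [hKa, hKb, div_le_div_iff₀ h1a h1b]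
  have hkey : Wb * (1 - a) ≤ t * Wa * (1 - a) + (1 - t) * (1 - a) :=
    by nlinarith [mul_le_mul_of_nonneg_right hconv h1a.le]
  have e1 : t * Wa * (1 - a) = Wa * (1 - b) := by
    rw [mul_comm t Wa, mul_assoc, ht']
  have e2 : (1 - t) * (1 - a) = (1 - a) - (1 - b) := by
    rw [sub_mul, one_mul, ht']
  rw [e1, e2] at hkey
  nlinarith [hkey]

lemma kappaAlpha_bdd (hconn : G.Connected) (hd : ∀ v : V, 0 < G.degree v)
    {x y : V} (hxy : G.Adj x y) {α : ℝ} (hα : α ∈ Set.Ioo (0:ℝ) 1) :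
    kappaAlpha G α x y / (1 - α) ≤ 2 := by
  have d1 : G.dist x y = 1 := SimpleGraph.dist_eq_one_iff_adj.2 hxy
  have h1α : 0 < 1 - α := by linarith [hα.2]
  have hlow := wass_lower G hconn hd hα.1.le hα.2.le hxy.ne
  rw [d1] at hlow
  have hK : kappaAlpha G α x y = 1 - Wass G (mMeas G α x) (mMeas G α y) := by
    rw [kappaAlpha, d1]; norm_num
  rw [hK, div_le_iff₀ h1α]
  push_cast at hlow
  linarith

lemma kappa_tendsto (hconn : G.Connected) (hd : ∀ v : V, 0 < G.degree v)
    {x y : V} (hxy : G.Adj x y) :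
    Filter.Tendsto (fun α => kappaAlpha G α x y / (1 - α)) (𝓝[<] (1:ℝ))
      (𝓝 (kappa G x y)) := by
  have hne : (Set.Ioo (0:ℝ) 1).Nonempty := ⟨1/2, by norm_num⟩
  have hbdd : BddAbove ((fun α => kappaAlpha G α x y / (1 - α)) '' Set.Ioo (0:ℝ) 1) := by
    refine ⟨2, ?_⟩
    rintro c ⟨α, hα, rfl⟩
    exact kappaAlpha_bdd G hconn hd hxy hα
  have h := MonotoneOn.tendsto_nhdsWithin_Ioo_left hne (kappaAlpha_mono G hd hxy) hbdd
  have heq : kappa G x y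
      = sSup ((fun α => kappaAlpha G α x y / (1 - α)) '' Set.Ioo (0:ℝ) 1) :=
    h.limUnder_eq
  rw [heq]
  exact h

end LLYaux

theorem stmt12 {V : Type*} [Fintype V] [DecidableEq V]
    (G : SimpleGraph V) [DecidableRel G.Adj]
    (hconn : G.Connected) (hcard : 1 < Fintype.card V)
    (κ₀ : ℝ) (hκ₀ : 0 < κ₀) (h : ∀ x y : V, G.Adj x y → κ₀ ≤ kappa G x y) :
    ∀ x y : V, (G.dist x y : ℝ) ≤ 2 / κ₀ := by
  have hd : ∀ v : V, 0 < G.degree v := by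
    intro v
    obtain ⟨w, hw⟩ := Fintype.exists_ne_of_one_lt_card hcard v
    obtain ⟨p⟩ := hconn.preconnected v w
    have hnil : ¬ p.Nil := SimpleGraph.Walk.not_nil_of_ne (hw.symm : v ≠ w)
    rw [G.degree_pos_iff_exists_adj]
    exact ⟨p.getVert 1, p.adj_snd hnil⟩
  intro x y
  rcases eq_or_ne x y with rfl | hxy
  · rw [SimpleGraph.dist_self]
    push_cast
    positivity
  have hdpos : 0 < G.dist x y := hconn.pos_dist_of_ne hxy
  have hdpos' : (0:ℝ) < (G.dist x y : ℝ) := by exact_mod_cast hdpos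
  have hδ : ∀ ε : ℝ, 0 < ε → (G.dist x y : ℝ) * (κ₀ - ε) ≤ 2 := by
    intro ε hε
    have hev : ∀ᶠ α in 𝓝[<] (1:ℝ),
        ∀ u v : V, G.Adj u v → κ₀ - ε < kappaAlpha G α u v / (1 - α) := by
      rw [Filter.eventually_all]
      intro u
      rw [Filter.eventually_all]
      intro v
      by_cases huv : G.Adj u v
      · have hk : κ₀ - ε < kappa G u v := by linarith [h u v huv]
        exact ((LLYaux.kappa_tendsto G hconn hd huv).eventually
          (eventually_gt_nhds hk)).mono fun α hα _ => hα
      · exact Filter.Eventually.of_forall fun α h' => absurd h' huv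
    have hev2 : ∀ᶠ α in 𝓝[<] (1:ℝ), (0:ℝ) < α :=
      eventually_nhdsWithin_of_eventually_nhds (eventually_gt_nhds one_pos)
    have hev3 : ∀ᶠ α in 𝓝[<] (1:ℝ), α < 1 :=
      Filter.eventually_iff.2 self_mem_nhdsWithin
    obtain ⟨α, hedges, hα0, hα1⟩ := (hev.and (hev2.and hev3)).exists
    obtain ⟨hα0, hα1⟩ := (⟨hα0, hα1⟩ : (0:ℝ) < α ∧ α < 1)
    have h1α : 0 < 1 - α := by linarith
    set c : ℝ := 1 - (1 - α) * (κ₀ - ε) with hc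
    have hedge : ∀ u v : V, G.Adj u v →
        Wass G (mMeas G α u) (mMeas G α v) ≤ c := by
      intro u v huv
      have h1 := hedges u v huv
      have hd1 : G.dist u v = 1 := SimpleGraph.dist_eq_one_iff_adj.2 huv
      have h2 : (κ₀ - ε) * (1 - α) < kappaAlpha G α u v := (lt_div_iff₀ h1α).1 h1
      have hK : kappaAlpha G α u v = 1 - Wass G (mMeas G α u) (mMeas G α v) := by
        rw [kappaAlpha, hd1]; norm_num
      rw [hK] at h2
      rw [hc]
      linarith
    obtain ⟨p, hp⟩ := hconn.exists_walk_length_eq_dist x y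
    have hup := LLYaux.wass_chain G hconn hd hα0.le hα1.le hedge p
    rw [hp] at hup
    have hlow := LLYaux.wass_lower G hconn hd hα0.le hα1.le hxy
    rw [hc] at hup
    have hkey : (G.dist x y : ℝ) * (κ₀ - ε) * (1 - α) ≤ 2 * (1 - α) := by nlinarith
    exact (mul_le_mul_iff_of_pos_right h1α).1 hkey
  have hfin : (G.dist x y : ℝ) * κ₀ ≤ 2 := by
    by_contra hcon
    push_neg at hcon
    set d : ℝ := (G.dist x y : ℝ) with hdd
    set ε : ℝ := (d * κ₀ - 2) / (2 * d) with hε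
    have hεpos : 0 < ε := div_pos (by linarith) (by linarith)
    have hde : d * ε = (d * κ₀ - 2) / 2 := by
      rw [hε]
      field_simp
    have := hδ ε hεpos
    have hexp : d * (κ₀ - ε) = d * κ₀ - d * ε := by ring
    rw [hexp, hde] at this
    linarith
  rw [le_div_iff₀ hκ₀]
  exact hfin
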